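/- Let m be an odd positive integer and let r > 0. Then there exist constants a₀ > 0 and c > 0 such that for all real a with 0 < a ≤ a₀ and all real λ, μ with max(|λ|, |μ|) ≥ r, one has |p(λ,μ;ia)| ≥ c·(|λ| + |μ|)^{m-1}, where i is the imaginary unit. -/

import Mathlib

open Finset

lemma abs_pow_sub_pow_le' (x y : ℂ) (M : ℝ) (hx : ‖x‖ ≤ M) (hy : ‖y‖ ≤ M)
    (n : ℕ) : ‖x ^ n - y ^ n‖ ≤ n * M ^ (n - 1) * ‖x - y‖ := by
  have hM : 0 ≤ M := (norm_nonneg x).trans hx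
  rw [← geom_sum₂_mul x y n, norm_mul]
  have h1 : ‖∑ i ∈ range n, x ^ i * y ^ (n - 1 - i)‖ ≤ n * M ^ (n - 1) := by
    calc ‖∑ i ∈ range n, x ^ i * y ^ (n - 1 - i)‖
        ≤ ∑ i ∈ range n, ‖x ^ i * y ^ (n - 1 - i)‖ :=
          norm_sum_le _ _
      _ ≤ ∑ _i ∈ range n, M ^ (n - 1) := by
          refine Finset.sum_le_sum fun i hi => ?_
          rw [norm_mul, norm_pow, norm_pow]
          have hi' : i + (n - 1 - i) = n - 1 := by
            have := Finset.mem_range.mp hi; omega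
          calc ‖x‖ ^ i * ‖y‖ ^ (n - 1 - i)
              ≤ M ^ i * M ^ (n - 1 - i) := by
                gcongr <;> exact norm_nonneg _
            _ = M ^ (n - 1) := by rw [← pow_add, hi']
      _ = n * M ^ (n - 1) := by rw [Finset.sum_const, Finset.card_range, nsmul_eq_mul]
  exact mul_le_mul_of_nonneg_right h1 (norm_nonneg _)

lemma abs_prod_pow_sub_le (u v x y : ℂ) (M a : ℝ)
    (hu : ‖u‖ ≤ M) (hv : ‖v‖ ≤ M)
    (hx : ‖x‖ ≤ M) (hy : ‖y‖ ≤ M)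
    (hua : ‖u - x‖ ≤ a) (hva : ‖v - y‖ ≤ a)
    (k j n : ℕ) (hkj : k + j = n + 1) :
    ‖u ^ k * v ^ j - x ^ k * y ^ j‖ ≤ (n + 1) * (M ^ n * a) := by
  have hM : 0 ≤ M := (norm_nonneg u).trans hu
  have ha : 0 ≤ a := (norm_nonneg _).trans hua
  have key : u ^ k * v ^ j - x ^ k * y ^ j
      = (u ^ k - x ^ k) * v ^ j + x ^ k * (v ^ j - y ^ j) := by ring
  rw [key]
  refine (norm_add_le _ _).trans ?_
  rw [norm_mul, norm_mul, norm_pow, norm_pow]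
  have h1 : ‖u ^ k - x ^ k‖ * ‖v‖ ^ j ≤ k * (M ^ n * a) := by
    rcases Nat.eq_zero_or_pos k with hk | hk
    · simp [hk]
    · have hbd : ‖u ^ k - x ^ k‖ ≤ k * M ^ (k - 1) * a := by
        refine (abs_pow_sub_pow_le' u x M hu hx k).trans ?_
        have : (0:ℝ) ≤ (k : ℝ) * M ^ (k - 1) := by positivity
        exact mul_le_mul_of_nonneg_left hua this
      have hvj : ‖v‖ ^ j ≤ M ^ j :=
        pow_le_pow_left₀ (norm_nonneg _) hv j
      calc ‖u ^ k - x ^ k‖ * ‖v‖ ^ j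
          ≤ (k * M ^ (k - 1) * a) * M ^ j := by
            exact mul_le_mul hbd hvj (by positivity) (by positivity)
        _ = (k : ℝ) * (M ^ (k - 1) * M ^ j * a) := by ring
        _ = (k : ℝ) * (M ^ n * a) := by
            rw [← pow_add, show k - 1 + j = n by omega]
  have h2 : ‖x‖ ^ k * ‖v ^ j - y ^ j‖ ≤ j * (M ^ n * a) := by
    rcases Nat.eq_zero_or_pos j with hj | hj
    · simp [hj]
    · have hbd : ‖v ^ j - y ^ j‖ ≤ j * M ^ (j - 1) * a := by
        refine (abs_pow_sub_pow_le' v y M hv hy j).trans ?_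
        have : (0:ℝ) ≤ (j : ℝ) * M ^ (j - 1) := by positivity
        exact mul_le_mul_of_nonneg_left hva this
      have hxk : ‖x‖ ^ k ≤ M ^ k :=
        pow_le_pow_left₀ (norm_nonneg _) hx k
      calc ‖x‖ ^ k * ‖v ^ j - y ^ j‖
          ≤ M ^ k * (j * M ^ (j - 1) * a) := by
            exact mul_le_mul hxk hbd (norm_nonneg _) (by positivity)
        _ = (j : ℝ) * (M ^ k * M ^ (j - 1) * a) := by ring
        _ = (j : ℝ) * (M ^ n * a) := by
            rw [← pow_add, show k + (j - 1) = n by omega]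
  calc ‖u ^ k - x ^ k‖ * ‖v‖ ^ j
        + ‖x‖ ^ k * ‖v ^ j - y ^ j‖
      ≤ k * (M ^ n * a) + j * (M ^ n * a) := add_le_add h1 h2
    _ = ((k : ℝ) + j) * (M ^ n * a) := by ring
    _ = (n + 1) * (M ^ n * a) := by
        rw [show ((k:ℝ) + j) = ((k + j : ℕ) : ℝ) by push_cast; ring, hkj]; push_cast; ring

lemma qsum_lower (m : ℕ) (hm : 0 < m) (hodd : Odd m) (l μ : ℝ) :
    ((|l| + |μ|) / 2) ^ (m - 1) ≤ ∑ j ∈ range m, l ^ (m - 1 - j) * μ ^ j := by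
  rcases le_or_gt 0 (l * μ) with hlm | hlm
  · -- same sign
    have hterm : ∀ j ∈ range m, l ^ (m - 1 - j) * μ ^ j = |l| ^ (m - 1 - j) * |μ| ^ j := by
      intro j hj
      have hj' : j < m := mem_range.mp hj
      have hnn : 0 ≤ l ^ (m - 1 - j) * μ ^ j := by
        rcases mul_nonneg_iff.mp hlm with ⟨h1, h2⟩ | ⟨h1, h2⟩
        · exact mul_nonneg (pow_nonneg h1 _) (pow_nonneg h2 _)
        · have hkj : Even ((m - 1 - j) + j) := by
            rw [show m - 1 - j + j = m - 1 by omega]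
            exact Nat.Odd.sub_odd hodd odd_one
          have hpar : Even (m - 1 - j) ↔ Even j := Nat.even_add.mp hkj
          rcases Nat.even_or_odd j with hj2 | hj2
          · exact mul_nonneg ((hpar.mpr hj2).pow_nonneg l) (hj2.pow_nonneg μ)
          · have hk : Odd (m - 1 - j) := by
              rcases Nat.even_or_odd (m - 1 - j) with h | h
              · exact absurd hj2 (Nat.not_odd_iff_even.mpr (hpar.mp h))
              · exact h
            exact mul_nonneg_iff.mpr (Or.inr ⟨hk.pow_nonpos h1, hj2.pow_nonpos h2⟩)
      rw [← abs_pow, ← abs_pow, ← abs_mul, abs_of_nonneg hnn]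
    rw [Finset.sum_congr rfl hterm]
    have hnn : ∀ j ∈ range m, (0:ℝ) ≤ |l| ^ (m - 1 - j) * |μ| ^ j := fun j _ =>
      mul_nonneg (pow_nonneg (abs_nonneg l) _) (pow_nonneg (abs_nonneg μ) _)
    rcases le_total |μ| |l| with hle | hle
    · have h0 : (0:ℕ) ∈ range m := mem_range.mpr hm
      have := Finset.single_le_sum hnn h0
      simp only [pow_zero, mul_one, Nat.sub_zero] at this
      refine le_trans ?_ this
      refine pow_le_pow_left₀ (by positivity) ?_ _
      linarith
    · have h0 : m - 1 ∈ range m := mem_range.mpr (by omega)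
      have := Finset.single_le_sum hnn h0
      rw [show m - 1 - (m - 1) = 0 by omega, pow_zero, one_mul] at this
      refine le_trans ?_ this
      refine pow_le_pow_left₀ (by positivity) ?_ _
      linarith
  · -- mixed sign
    have hid : (∑ j ∈ range m, l ^ (m - 1 - j) * μ ^ j) * (μ - l) = μ ^ m - l ^ m := by
      have h := geom_sum₂_mul μ l m
      rw [← h]
      congr 1
      exact Finset.sum_congr rfl fun j _ => mul_comm _ _
    have key : (∑ j ∈ range m, l ^ (m - 1 - j) * μ ^ j) * (|l| + |μ|)
        = |l| ^ m + |μ| ^ m := by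
      rcases mul_neg_iff.mp hlm with ⟨h1, h2⟩ | ⟨h1, h2⟩
      · rw [abs_of_pos h1, abs_of_neg h2, hodd.neg_pow]
        linear_combination -hid
      · rw [abs_of_neg h1, abs_of_pos h2, hodd.neg_pow]
        linear_combination hid
    have hl0 : l ≠ 0 := by rintro rfl; simp at hlm
    have hs0 : 0 < |l| + |μ| := by
      have := abs_pos.mpr hl0
      linarith [abs_nonneg μ]
    rw [← mul_le_mul_iff_of_pos_right hs0, key]
    have hp : (|l| + |μ|) ^ m ≤ 2 ^ (m - 1) * (|l| ^ m + |μ| ^ m) :=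
      add_pow_le (abs_nonneg l) (abs_nonneg μ) m
    have hm1 : m - 1 + 1 = m := Nat.succ_pred_eq_of_pos hm
    have h2m : (0:ℝ) < 2 ^ (m - 1) := by positivity
    rw [div_pow, div_mul_eq_mul_div, div_le_iff₀ h2m]
    calc (|l| + |μ|) ^ (m - 1) * (|l| + |μ|) = (|l| + |μ|) ^ m := by
          rw [← pow_succ, hm1]
      _ ≤ 2 ^ (m - 1) * (|l| ^ m + |μ| ^ m) := hp
      _ = (|l| ^ m + |μ| ^ m) * 2 ^ (m - 1) := mul_comm _ _


/-- The polynomial `p(λ,μ;z) = ∑_{j=0}^{m-1} (λ - z)^{m-1-j} (μ - z)^j`. -/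
noncomputable def pker (m : ℕ) (l μ z : ℂ) : ℂ :=
  ∑ j ∈ Finset.range m, (l - z) ^ (m - 1 - j) * (μ - z) ^ j

/-- Second assertion of Lemma 3: for `m` odd and `max(|λ|,|μ|) ≥ r`,
`|p(λ,μ;ia)| ≥ c (|λ|+|μ|)^{m-1}` for all sufficiently small `a > 0`. -/
theorem pker_lower_bound_small_a (m : ℕ) (hm : 0 < m) (hodd : Odd m) (r : ℝ) (hr : 0 < r) :
    ∃ a₀ > 0, ∃ c > 0, ∀ a : ℝ, 0 < a → a ≤ a₀ → ∀ l μ : ℝ, r ≤ max |l| |μ| →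
      c * (|l| + |μ|) ^ (m - 1) ≤
        ‖pker m (l : ℂ) (μ : ℂ) ((a : ℂ) * Complex.I)‖ := by
  refine ⟨r / ((m : ℝ) ^ 2 * 4 ^ m), by positivity, (1/2) ^ m, by positivity, ?_⟩
  intro a ha ha0 l μ hmax
  have hsl : |l| ≤ |l| + |μ| := le_add_of_nonneg_right (abs_nonneg μ)
  have hsmu : |μ| ≤ |l| + |μ| := le_add_of_nonneg_left (abs_nonneg l)
  have hrs : r ≤ |l| + |μ| := hmax.trans (max_le hsl hsmu)
  have hs0 : 0 < |l| + |μ| := hr.trans_le hrs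
  by_cases hm1 : m = 1
  · subst hm1
    simp only [pker, range_one, Finset.sum_singleton, Nat.sub_self, Nat.sub_zero, pow_zero,
      one_mul, norm_one]
    norm_num
  obtain ⟨n, rfl⟩ : ∃ n, m = n + 2 := ⟨m - 2, by omega⟩
  set s := |l| + |μ| with hsdef
  have hD : (0:ℝ) < ((n:ℝ) + 2) ^ 2 * 4 ^ (n + 2) := by positivity
  have hden : (1:ℝ) ≤ ((n:ℝ) + 2) ^ 2 * 4 ^ (n + 2) := by
    have h1 : (1:ℝ) ≤ ((n:ℝ) + 2) ^ 2 := by nlinarith [Nat.cast_nonneg (α := ℝ) n]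
    have h2 : (1:ℝ) ≤ (4:ℝ) ^ (n + 2) := by
      simpa using pow_le_pow_left₀ (by norm_num : (0:ℝ) ≤ 1) (by norm_num : (1:ℝ) ≤ 4) (n + 2)
    nlinarith
  have ha0' : a ≤ s / (((n:ℝ) + 2) ^ 2 * 4 ^ (n + 2)) := by
    refine ha0.trans ?_
    have hcast : (((n + 2 : ℕ)) : ℝ) ^ 2 = ((n:ℝ) + 2) ^ 2 := by push_cast; ring
    rw [hcast]
    gcongr
  have hasmall : a ≤ s := ha0'.trans (div_le_self hs0.le hden)
  set M := s + a with hMdef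
  have hMpos : 0 < M := by simp only [hMdef]; linarith
  have habsaI : ‖(a:ℂ) * Complex.I‖ = a := by
    rw [norm_mul, Complex.norm_I, Complex.norm_real, Real.norm_eq_abs, mul_one, abs_of_pos ha]
  have habs_sub : ∀ x y : ℂ, ‖x - y‖ ≤ ‖x‖ + ‖y‖ := by
    intro x y
    simpa using norm_sub_le x y
  set q : ℝ := ∑ j ∈ range (n + 2), l ^ (n + 2 - 1 - j) * μ ^ j with hq
  have hqlow : (s / 2) ^ (n + 2 - 1) ≤ q := qsum_lower (n + 2) (by omega) hodd l μ
  -- the difference bound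
  have hsplit : (q:ℂ) - pker (n + 2) l μ ((a:ℂ) * Complex.I) = ∑ j ∈ range (n + 2),
      ((l:ℂ) ^ (n + 2 - 1 - j) * (μ:ℂ) ^ j
        - ((l:ℂ) - (a:ℂ) * Complex.I) ^ (n + 2 - 1 - j) * ((μ:ℂ) - (a:ℂ) * Complex.I) ^ j) := by
    rw [hq, pker]
    push_cast
    rw [← Finset.sum_sub_distrib]
  have hdiff : ‖(q:ℂ) - pker (n + 2) l μ ((a:ℂ) * Complex.I)‖
      ≤ ((n:ℝ) + 2) * (((n:ℝ) + 1) * (M ^ n * a)) := by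
    rw [hsplit]
    refine (norm_sum_le _ _).trans ?_
    have hbound : ∀ j ∈ range (n + 2),
        ‖(l:ℂ) ^ (n + 2 - 1 - j) * (μ:ℂ) ^ j
          - ((l:ℂ) - (a:ℂ) * Complex.I) ^ (n + 2 - 1 - j) * ((μ:ℂ) - (a:ℂ) * Complex.I) ^ j‖
          ≤ ((n:ℝ) + 1) * (M ^ n * a) := by
      intro j hj
      have hj' : j < n + 2 := mem_range.mp hj
      have hlM : ‖(l:ℂ)‖ ≤ M := by
        rw [Complex.norm_real, Real.norm_eq_abs]; simp only [hMdef]; linarith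
      have hμM : ‖(μ:ℂ)‖ ≤ M := by
        rw [Complex.norm_real, Real.norm_eq_abs]; simp only [hMdef]; linarith
      have hlM' : ‖(l:ℂ) - (a:ℂ) * Complex.I‖ ≤ M := by
        refine (habs_sub _ _).trans ?_
        rw [habsaI, Complex.norm_real, Real.norm_eq_abs]
        simp only [hMdef]; linarith
      have hμM' : ‖(μ:ℂ) - (a:ℂ) * Complex.I‖ ≤ M := by
        refine (habs_sub _ _).trans ?_
        rw [habsaI, Complex.norm_real, Real.norm_eq_abs]
        simp only [hMdef]; linarith
      have hua : ‖(l:ℂ) - ((l:ℂ) - (a:ℂ) * Complex.I)‖ ≤ a := by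
        rw [show (l:ℂ) - ((l:ℂ) - (a:ℂ) * Complex.I) = (a:ℂ) * Complex.I by ring, habsaI]
      have hva : ‖(μ:ℂ) - ((μ:ℂ) - (a:ℂ) * Complex.I)‖ ≤ a := by
        rw [show (μ:ℂ) - ((μ:ℂ) - (a:ℂ) * Complex.I) = (a:ℂ) * Complex.I by ring, habsaI]
      have := abs_prod_pow_sub_le (l:ℂ) (μ:ℂ) ((l:ℂ) - (a:ℂ) * Complex.I)
        ((μ:ℂ) - (a:ℂ) * Complex.I) M a hlM hμM hlM' hμM' hua hva
        (n + 2 - 1 - j) j n (by omega)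
      exact_mod_cast this
    calc ∑ j ∈ range (n + 2), ‖(l:ℂ) ^ (n + 2 - 1 - j) * (μ:ℂ) ^ j
          - ((l:ℂ) - (a:ℂ) * Complex.I) ^ (n + 2 - 1 - j) * ((μ:ℂ) - (a:ℂ) * Complex.I) ^ j‖
        ≤ ∑ _j ∈ range (n + 2), ((n:ℝ) + 1) * (M ^ n * a) := Finset.sum_le_sum hbound
      _ = ((n:ℝ) + 2) * (((n:ℝ) + 1) * (M ^ n * a)) := by
          rw [Finset.sum_const, Finset.card_range, nsmul_eq_mul]
          push_cast; ring
  -- numeric bound on the error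
  have hEbound : ((n:ℝ) + 2) * (((n:ℝ) + 1) * (M ^ n * a)) ≤ (s / 2) ^ (n + 2 - 1) / 2 := by
    have hexp : n + 2 - 1 = n + 1 := rfl
    rw [hexp]
    have hM2s : M ≤ 2 * s := by simp only [hMdef]; linarith
    have h1 : ((n:ℝ) + 2) * (((n:ℝ) + 1) * (M ^ n * a))
        ≤ ((n:ℝ) + 2) * (((n:ℝ) + 2) * ((2 * s) ^ n * a)) := by
      gcongr <;> linarith
    have h2 : ((n:ℝ) + 2) * (((n:ℝ) + 2) * ((2 * s) ^ n * a))
        ≤ ((n:ℝ) + 2) * (((n:ℝ) + 2) * ((2 * s) ^ n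
            * (s / (((n:ℝ) + 2) ^ 2 * 4 ^ (n + 2))))) := by
      gcongr
    have h3 : ((n:ℝ) + 2) * (((n:ℝ) + 2) * ((2 * s) ^ n
          * (s / (((n:ℝ) + 2) ^ 2 * 4 ^ (n + 2)))))
        = s ^ (n + 1) * 2 ^ n / 4 ^ (n + 2) := by
      rw [mul_pow, pow_succ]
      field_simp
      ring
    have h4 : s ^ (n + 1) * 2 ^ n / 4 ^ (n + 2) ≤ s ^ (n + 1) / 2 ^ (n + 2) := by
      rw [div_le_div_iff₀ (by positivity) (by positivity)]
      have h44 : (4:ℝ) ^ (n + 2) = 2 ^ (n + 2) * 2 ^ (n + 2) := by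
        rw [← mul_pow]; norm_num
      have h2n : (2:ℝ) ^ n ≤ 2 ^ (n + 2) := pow_le_pow_right₀ one_le_two (by omega)
      calc s ^ (n + 1) * 2 ^ n * 2 ^ (n + 2) = s ^ (n + 1) * (2 ^ n * 2 ^ (n + 2)) := by ring
        _ ≤ s ^ (n + 1) * (2 ^ (n + 2) * 2 ^ (n + 2)) := by gcongr
        _ = s ^ (n + 1) * 4 ^ (n + 2) := by rw [h44]
    have h5 : s ^ (n + 1) / 2 ^ (n + 2) = (s / 2) ^ (n + 1) / 2 := by
      rw [div_pow]
      field_simp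
      ring
    linarith
  have hcs : (1/2:ℝ) ^ (n + 2) * s ^ (n + 2 - 1) = (s / 2) ^ (n + 2 - 1) / 2 := by
    have hexp : n + 2 - 1 = n + 1 := rfl
    rw [hexp, div_pow, div_pow]
    field_simp
    ring
  have htri : q ≤ ‖pker (n + 2) l μ ((a:ℂ) * Complex.I)‖
      + ‖(q:ℂ) - pker (n + 2) l μ ((a:ℂ) * Complex.I)‖ := by
    calc q ≤ |q| := le_abs_self q
      _ = ‖(q:ℂ)‖ := by rw [Complex.norm_real, Real.norm_eq_abs]
      _ = ‖pker (n + 2) l μ ((a:ℂ) * Complex.I)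
            + ((q:ℂ) - pker (n + 2) l μ ((a:ℂ) * Complex.I))‖ := by ring_nf
      _ ≤ _ := norm_add_le _ _
  calc (1/2:ℝ) ^ (n + 2) * s ^ (n + 2 - 1) = (s / 2) ^ (n + 2 - 1) / 2 := hcs
    _ ≤ ‖pker (n + 2) l μ ((a:ℂ) * Complex.I)‖ := by linarith
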